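/- Let A be a Noetherian ring. Then A is integrally closed in Q(A) (i.e., Ā = A) if and only if every ideal M ∈ Max Λ(A) is principal, i.e., μ_A(M) = 1 for every M ∈ Max Λ(A). -/

import Mathlib

open scoped TensorProduct

/-- `a` belongs to the integral closure of the ideal `I`: it satisfies an equation
`a ^ n + c 1 * a ^ (n - 1) + ⋯ + c n = 0` with `c i ∈ I ^ i`, for some `n ≥ 1`. -/
def MemIdealIntegralClosure {A : Type*} [CommRing A] (I : Ideal A) (a : A) : Prop :=
  ∃ n : ℕ, 0 < n ∧ ∃ c : ℕ → A,
    (∀ i ∈ Finset.Icc 1 n, c i ∈ I ^ i) ∧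
    a ^ n + ∑ i ∈ Finset.Icc 1 n, c i * a ^ (n - i) = 0

/-- The integral closure `Ī` of an ideal `I` of `A`, as a subset of `A`. -/
def idealIntegralClosure {A : Type*} [CommRing A] (I : Ideal A) : Set A :=
  {a | MemIdealIntegralClosure I a}

/-- An ideal `I` is integrally closed if `Ī = I`. -/
def Ideal.IsIntegrallyClosedIdeal {A : Type*} [CommRing A] (I : Ideal A) : Prop :=
  idealIntegralClosure I = (I : Set A)

/-- `Λ(A)`: the set of ideals of `A` of the form `\overline{(x)}` (the integral closure
of the principal ideal `x A`) with `x` a non-zerodivisor on `A`. -/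
def LambdaSet (A : Type*) [CommRing A] : Set (Ideal A) :=
  {J | ∃ x ∈ nonZeroDivisors A, (J : Set A) = idealIntegralClosure (Ideal.span {x})}

/-- `Max Λ(A)`: the maximal elements, with respect to inclusion, of the set of proper
ideals of `A` belonging to `Λ(A)`. -/
def MaxLambdaSet (A : Type*) [CommRing A] : Set (Ideal A) :=
  {J | J ∈ LambdaSet A ∧ J ≠ ⊤ ∧
    ∀ K ∈ LambdaSet A, K ≠ ⊤ → J ≤ K → J = K}

section Aux
variable {A : Type*} [CommRing A]

local notation "K" => FractionRing A
local notation "f" => algebraMap A (FractionRing A)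

lemma aux_mem_iff (x : A) (hx : x ∈ nonZeroDivisors A) (a : A) :
    MemIdealIntegralClosure (Ideal.span {x}) a ↔
      ∃ t : K, IsIntegral A t ∧ t * f x = f a := by
  classical
  have hinj : Function.Injective (f) := IsFractionRing.injective A K
  have hu : IsUnit (f x) := IsLocalization.map_units K ⟨x, hx⟩
  constructor
  · rintro ⟨n, hn, c, hc, heq⟩
    have hdvd : ∀ i ∈ Finset.Icc 1 n, x ^ i ∣ c i := by
      intro i hi
      have := hc i hi
      rwa [Ideal.span_singleton_pow, Ideal.mem_span_singleton] at this
    set d : ℕ → A := fun i => if h : x ^ i ∣ c i then h.choose else 0 with hd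
    have hcd : ∀ i ∈ Finset.Icc 1 n, c i = x ^ i * d i := by
      intro i hi
      simp only [hd, dif_pos (hdvd i hi)]
      exact (hdvd i hi).choose_spec
    set t : K := f a * ↑hu.unit⁻¹ with ht
    have htx : t * f x = f a := by
      rw [ht, mul_assoc, IsUnit.val_inv_mul, mul_one]
    refine ⟨t, ?_, htx⟩
    refine ⟨Polynomial.X ^ n + ∑ i ∈ Finset.Icc 1 n, Polynomial.C (d i) * Polynomial.X ^ (n - i), ?_, ?_⟩
    · obtain ⟨m, rfl⟩ : ∃ m, n = m + 1 := ⟨n - 1, (Nat.succ_pred_eq_of_pos hn).symm⟩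
      apply Polynomial.monic_X_pow_add
      refine lt_of_le_of_lt (Polynomial.degree_sum_le _ _) ?_
      rw [Finset.sup_lt_iff (by exact_mod_cast WithBot.bot_lt_coe (m+1))]
      intro i hi
      refine lt_of_le_of_lt (Polynomial.degree_C_mul_X_pow_le _ _) ?_
      simp only [Finset.mem_Icc] at hi
      have : m + 1 - i < m + 1 := by omega
      exact_mod_cast this
    · have hxu : IsUnit ((f x) ^ n) := hu.pow n
      have hE : Polynomial.eval₂ (f) t
          (Polynomial.X ^ n + ∑ i ∈ Finset.Icc 1 n, Polynomial.C (d i) * Polynomial.X ^ (n - i))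
          = t ^ n + ∑ i ∈ Finset.Icc 1 n, f (d i) * t ^ (n - i) := by
        simp [Polynomial.eval₂_finset_sum]
      rw [hE]
      have hmul : (t ^ n + ∑ i ∈ Finset.Icc 1 n, f (d i) * t ^ (n - i)) * (f x) ^ n
          = f (a ^ n + ∑ i ∈ Finset.Icc 1 n, c i * a ^ (n - i)) := by
        rw [add_mul, Finset.sum_mul, map_add, map_pow, map_sum]
        congr 1
        · rw [← mul_pow, htx]
        · apply Finset.sum_congr rfl
          intro i hi
          have h2 : i ≤ n := (Finset.mem_Icc.mp hi).2
          have hsp : (f x) ^ n = (f x) ^ i * (f x) ^ (n - i) := by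
            rw [← pow_add, Nat.add_sub_cancel' h2]
          rw [hcd i hi]
          simp only [map_mul, map_pow]
          rw [← htx, mul_pow, hsp]
          ring
      rw [heq, map_zero] at hmul
      have h0 : (t ^ n + ∑ i ∈ Finset.Icc 1 n, f (d i) * t ^ (n - i)) * (f x) ^ n
          = 0 * (f x) ^ n := by rw [hmul, zero_mul]
      exact hxu.mul_right_cancel h0
  · rintro ⟨t, ⟨p, pmonic, hev⟩, htx⟩
    set n := p.natDegree with hn
    rcases Nat.eq_zero_or_pos n with h0 | hn1
    · have hp1 : p = 1 := pmonic.natDegree_eq_zero.mp (hn ▸ h0)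
      rw [hp1, Polynomial.eval₂_one] at hev
      have h10 : (1 : A) = 0 := hinj (by rw [map_one, map_zero]; exact hev)
      have hsub : Subsingleton A := subsingleton_of_zero_eq_one h10.symm
      exact ⟨1, one_pos, fun _ => 0, by simp, Subsingleton.elim _ _⟩
    · refine ⟨n, hn1, fun i => p.coeff (n - i) * x ^ i, ?_, ?_⟩
      · intro i hi
        rw [Ideal.span_singleton_pow, Ideal.mem_span_singleton]
        exact dvd_mul_left _ _
      · have e1 : Polynomial.eval₂ (f) t p * (f x) ^ n
            = ∑ j ∈ Finset.range (n + 1), f (p.coeff j) * ((f a) ^ j * (f x) ^ (n - j)) := by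
          rw [Polynomial.eval₂_eq_sum_range, Finset.sum_mul]
          apply Finset.sum_congr rfl
          intro j hj
          have hj' : j ≤ n := Nat.lt_succ_iff.mp (Finset.mem_range.mp hj)
          have hsp : (f x) ^ n = (f x) ^ j * (f x) ^ (n - j) := by
            rw [← pow_add, Nat.add_sub_cancel' hj']
          rw [← htx, mul_pow, hsp]
          ring
        have e2 : ∑ j ∈ Finset.range (n + 1), f (p.coeff j) * ((f a) ^ j * (f x) ^ (n - j))
            = f a ^ n + ∑ i ∈ Finset.Icc 1 n, f (p.coeff (n - i) * x ^ i * a ^ (n - i)) := by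
          rw [Finset.sum_range_succ, pmonic.coeff_natDegree]
          simp only [map_one, one_mul, Nat.sub_self, pow_zero, mul_one]
          rw [add_comm]
          congr 1
          refine Finset.sum_nbij' (fun j => n - j) (fun i => n - i) ?_ ?_ ?_ ?_ ?_
          · intro j hj
            simp only [Finset.mem_range] at hj
            simp only [Finset.mem_Icc]
            omega
          · intro i hi
            simp only [Finset.mem_Icc] at hi
            simp only [Finset.mem_range]
            omega
          · intro j hj; simp only [Finset.mem_range] at hj
            show n - (n - j) = j
            omega
          · intro i hi; simp only [Finset.mem_Icc] at hi
            show n - (n - i) = i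
            omega
          · intro j hj
            simp only [Finset.mem_range] at hj
            have hj' : j ≤ n := le_of_lt hj
            rw [Nat.sub_sub_self hj', map_mul, map_mul, map_pow, map_pow]
            ring
        apply hinj
        rw [map_zero, map_add, map_pow, map_sum, ← e2, ← e1, hev, zero_mul]
end Aux
section Aux2
variable {A : Type*} [CommRing A]

local notation "K" => FractionRing A
local notation "f" => algebraMap A (FractionRing A)

/-- The integral closure of the principal ideal `(x)` as an ideal, for `x` a
non-zerodivisor. -/
def auxClosureIdeal (x : A) (hx : x ∈ nonZeroDivisors A) : Ideal A where
  carrier := idealIntegralClosure (Ideal.span {x})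
  add_mem' := by
    intro a b ha hb
    obtain ⟨t, ht, htx⟩ := (aux_mem_iff x hx a).mp ha
    obtain ⟨s, hs, hsx⟩ := (aux_mem_iff x hx b).mp hb
    exact (aux_mem_iff x hx (a + b)).mpr
      ⟨t + s, ht.add hs, by rw [add_mul, htx, hsx, map_add]⟩
  zero_mem' :=
    (aux_mem_iff x hx 0).mpr ⟨0, isIntegral_zero, by rw [zero_mul, map_zero]⟩
  smul_mem' := by
    intro r a ha
    obtain ⟨t, ht, htx⟩ := (aux_mem_iff x hx a).mp ha
    refine (aux_mem_iff x hx (r • a)).mpr ⟨f r * t, (isIntegral_algebraMap).mul ht, ?_⟩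
    rw [mul_assoc, htx, ← map_mul, smul_eq_mul]

lemma aux_mem_closureIdeal {x : A} (hx : x ∈ nonZeroDivisors A) (a : A) :
    a ∈ auxClosureIdeal x hx ↔ MemIdealIntegralClosure (Ideal.span {x}) a := Iff.rfl

lemma aux_closureIdeal_coe (x : A) (hx : x ∈ nonZeroDivisors A) :
    (auxClosureIdeal x hx : Set A) = idealIntegralClosure (Ideal.span {x}) := rfl

lemma aux_closureIdeal_mem_lambda (x : A) (hx : x ∈ nonZeroDivisors A) :
    auxClosureIdeal x hx ∈ LambdaSet A := ⟨x, hx, rfl⟩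

lemma aux_span_le_closure (x : A) (hx : x ∈ nonZeroDivisors A) :
    Ideal.span {x} ≤ auxClosureIdeal x hx := by
  intro z hz
  obtain ⟨w, hw⟩ := Ideal.mem_span_singleton.mp hz
  exact (aux_mem_iff x hx z).mpr
    ⟨f w, isIntegral_algebraMap, by rw [← map_mul, mul_comm, ← hw]⟩

lemma aux_one_mem_unit (x : A) (h : MemIdealIntegralClosure (Ideal.span {x}) 1) :
    IsUnit x := by
  obtain ⟨n, hn, c, hc, heq⟩ := h
  simp only [one_pow, mul_one] at heq
  have h1 : (1 : A) ∈ Ideal.span {x} := by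
    have : (1 : A) = -∑ i ∈ Finset.Icc 1 n, c i := by linear_combination heq
    rw [this]
    refine neg_mem (Ideal.sum_mem _ fun i hi => ?_)
    have hi1 : i ≠ 0 := by
      have := (Finset.mem_Icc.mp hi).1; omega
    exact Ideal.pow_le_self hi1 (hc i hi)
  exact isUnit_of_dvd_one (Ideal.mem_span_singleton.mp h1)

lemma aux_descent (A : Type*) [CommRing A] [IsNoetherianRing A]
    (H : ∀ M ∈ MaxLambdaSet A, ∃ a : A, M = Ideal.span {a}) :
    ∀ x ∈ nonZeroDivisors A, ∀ a : A,
      MemIdealIntegralClosure (Ideal.span {x}) a → a ∈ Ideal.span {x} := by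
  have main : ∀ I : Ideal A, ∀ x ∈ nonZeroDivisors A, Ideal.span {x} = I →
      ∀ a : A, MemIdealIntegralClosure (Ideal.span {x}) a → a ∈ I := by
    intro I
    induction I using IsNoetherian.induction with
    | hgt I IH =>
    intro x hx hxI a ha
    by_cases hxu : IsUnit x
    · rw [← hxI, Ideal.span_singleton_eq_top.mpr hxu]; exact Submodule.mem_top
    · set C := auxClosureIdeal x hx with hC
      have hCl : C ∈ LambdaSet A := aux_closureIdeal_mem_lambda x hx
      have hCproper : C ≠ ⊤ := by
        intro h
        have h1 : (1 : A) ∈ C := by rw [h]; exact Submodule.mem_top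
        exact hxu (aux_one_mem_unit x ((aux_mem_closureIdeal hx 1).mp h1))
      obtain ⟨M, ⟨hMl, hMproper, hCM⟩, hMmax⟩ :=
        (set_has_maximal_iff_noetherian.mpr inferInstance)
          {J : Ideal A | J ∈ LambdaSet A ∧ J ≠ ⊤ ∧ C ≤ J} ⟨C, hCl, hCproper, le_refl C⟩
      have hMmaxΛ : M ∈ MaxLambdaSet A := by
        refine ⟨hMl, hMproper, fun Kk hK hKtop hMK => ?_⟩
        rcases hMK.lt_or_eq with hlt | heq
        · exact absurd hlt (hMmax Kk ⟨hK, hKtop, le_trans hCM hMK⟩)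
        · exact heq
      obtain ⟨y, hMy⟩ := H M hMmaxΛ
      have hxC : x ∈ C := (aux_mem_closureIdeal hx x).mpr
        ((aux_mem_iff x hx x).mpr ⟨1, isIntegral_one, by rw [one_mul]⟩)
      have hxM : x ∈ Ideal.span {y} := hMy ▸ hCM hxC
      obtain ⟨cc, hxcy⟩ := Ideal.mem_span_singleton.mp hxM
      have hy : y ∈ nonZeroDivisors A := by
        rw [mem_nonZeroDivisors_iff_right]
        intro r hr
        exact mem_nonZeroDivisors_iff_right.mp hx r (by rw [hxcy, ← mul_assoc, hr, zero_mul])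
      have hcc : cc ∈ nonZeroDivisors A := by
        rw [mem_nonZeroDivisors_iff_right]
        intro r hr
        exact mem_nonZeroDivisors_iff_right.mp hx r (by rw [hxcy, show r * (y * cc) = r * cc * y by ring, hr, zero_mul])
      have hyu : ¬ IsUnit y := fun h =>
        hMproper (hMy.trans (Ideal.span_singleton_eq_top.mpr h))
      have haM : a ∈ Ideal.span {y} := hMy ▸ hCM ((aux_mem_closureIdeal hx a).mpr ha)
      obtain ⟨b, haby⟩ := Ideal.mem_span_singleton.mp haM
      obtain ⟨t, ht, htx⟩ := (aux_mem_iff x hx a).mp ha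
      have hyK : IsUnit (algebraMap A (FractionRing A) y) :=
        IsLocalization.map_units (FractionRing A) (⟨y, hy⟩ : nonZeroDivisors A)
      have htc : t * algebraMap A (FractionRing A) cc = algebraMap A (FractionRing A) b := by
        apply hyK.mul_right_cancel
        rw [mul_assoc, ← map_mul, mul_comm cc y, ← hxcy, htx, haby, ← map_mul, mul_comm y b]
      have hb : MemIdealIntegralClosure (Ideal.span {cc}) b :=
        (aux_mem_iff cc hcc b).mpr ⟨t, ht, htc⟩
      have hle : Ideal.span {x} ≤ Ideal.span {cc} :=
        Ideal.span_singleton_le_span_singleton.mpr ⟨y, by rw [hxcy]; ring⟩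
      have hlt : I < Ideal.span {cc} := by
        rw [← hxI]
        refine lt_of_le_of_ne hle (fun heq => ?_)
        have : cc ∈ Ideal.span {x} := heq ▸ Ideal.mem_span_singleton_self cc
        obtain ⟨d, hd⟩ := Ideal.mem_span_singleton.mp this
        have h2 : cc = cc * (y * d) := by
          nth_rewrite 1 [hd]
          rw [hxcy]; ring
        have h0 : (1 - y * d) * cc = 0 := by linear_combination h2
        have h1 : (1 : A) - y * d = 0 := mem_nonZeroDivisors_iff_right.mp hcc _ h0
        exact hyu (IsUnit.of_mul_eq_one d (by linear_combination -h1))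
      have hbc : b ∈ Ideal.span {cc} := IH _ hlt cc hcc rfl b hb
      obtain ⟨e, hbe⟩ := Ideal.mem_span_singleton.mp hbc
      rw [← hxI, Ideal.mem_span_singleton]
      exact ⟨e, by rw [haby, hbe, hxcy]; ring⟩
  intro x hx a ha
  exact main (Ideal.span {x}) x hx rfl a ha

end Aux2

theorem integrallyClosed_iff_maxLambda_principal' (A : Type*) [CommRing A]
    [IsNoetherianRing A] :
    (∀ x : FractionRing A, IsIntegral A x →
        ∃ a : A, algebraMap A (FractionRing A) a = x) ↔
      ∀ M ∈ MaxLambdaSet A, ∃ a : A, M = Ideal.span {a} := by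
  have hinj : Function.Injective (algebraMap A (FractionRing A)) :=
    IsFractionRing.injective A (FractionRing A)
  constructor
  · intro IC M hM
    obtain ⟨x, hx, hMset⟩ := hM.1
    refine ⟨x, ?_⟩
    ext a
    have hmem : a ∈ M ↔ MemIdealIntegralClosure (Ideal.span {x}) a := by
      rw [show (a ∈ M) ↔ a ∈ (M : Set A) from Iff.rfl, hMset]; rfl
    rw [hmem, aux_mem_iff x hx a, Ideal.mem_span_singleton]
    constructor
    · rintro ⟨t, ht, htx⟩
      obtain ⟨b, hb⟩ := IC t ht
      refine ⟨b, hinj ?_⟩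
      rw [map_mul, hb, mul_comm, htx]
    · rintro ⟨b, hb⟩
      exact ⟨algebraMap A (FractionRing A) b, isIntegral_algebraMap,
        by rw [← map_mul, mul_comm, ← hb]⟩
  · intro H t ht
    obtain ⟨⟨a, s⟩, hs⟩ := IsLocalization.surj (nonZeroDivisors A) t
    have ha : MemIdealIntegralClosure (Ideal.span {(s : A)}) a :=
      (aux_mem_iff (s : A) s.2 a).mpr ⟨t, ht, hs⟩
    obtain ⟨b, hb⟩ := Ideal.mem_span_singleton.mp (aux_descent A H (s : A) s.2 a ha)
    refine ⟨b, ?_⟩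
    have hsu : IsUnit (algebraMap A (FractionRing A) (s : A)) :=
      IsLocalization.map_units (FractionRing A) s
    apply hsu.mul_right_cancel
    rw [hs, ← map_mul, mul_comm, ← hb]

/-- A Noetherian ring `A` is integrally closed in `Q(A)` iff every `M ∈ Max Λ(A)` is
principal, i.e. `μ_A(M) = 1`. -/
theorem integrallyClosed_iff_maxLambda_principal (A : Type*) [CommRing A]
    [IsNoetherianRing A] :
    (∀ x : FractionRing A, IsIntegral A x →
        ∃ a : A, algebraMap A (FractionRing A) a = x) ↔
      ∀ M ∈ MaxLambdaSet A, ∃ a : A, M = Ideal.span {a} := by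
  exact integrallyClosed_iff_maxLambda_principal' A
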